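/- Let Γ act on a set X with subgroups G₀ ≤ G₁, G₂ ≤ Γ such that G₁ ∩ G₂ = G₀, and suppose Θ₁, Θ₂ ⊆ X form a proper interactive pair: both nonempty, disjoint, G₀-invariant, with φ(Θ₂) ⊆ Θ₁ for all φ ∈ G₁ \ G₀ and φ(Θ₁) ⊆ Θ₂ for all φ ∈ G₂ \ G₀, and there exists θ₁ ∈ Θ₁ with θ₁ ∉ φ(Θ₂) for all φ ∈ G₁ \ G₀, and similarly θ₂ ∈ Θ₂. Then the natural map G₁ *_{G₀} G₂ → Γ is injective. -/

import Mathlib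

open Monoid List

/-- Ping-pong along an alternating word: applying the product of an alternating
word to a point of the set opposite to the last letter lands in the set of the
first letter. -/
private lemma pp_chain {Γ X : Type} [Group Γ] [MulAction Γ X]
    (G₀ : Subgroup Γ) (Gb : Bool → Subgroup Γ) (Θ : Bool → Set X)
    (hmap : ∀ b : Bool, ∀ g ∈ Gb b, g ∉ G₀ → ∀ x ∈ Θ (!b), g • x ∈ Θ b) :
    ∀ (l : List (Bool × Γ)) (p : Bool × Γ),
      (∀ q ∈ p :: l, q.2 ∈ Gb q.1 ∧ q.2 ∉ G₀) →
      (p :: l).Chain' (fun a b => a.1 ≠ b.1) →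
      ∀ θ ∈ Θ (!((p :: l).getLast (List.cons_ne_nil _ _)).1),
        ((p :: l).map Prod.snd).prod • θ ∈ Θ p.1 := by
  intro l
  induction l with
  | nil =>
    intro p hmem _ θ hθ
    obtain ⟨h1, h2⟩ := hmem p (List.mem_cons_self)
    simp only [List.getLast_singleton] at hθ
    simpa using hmap p.1 p.2 h1 h2 θ hθ
  | cons q l ih =>
    intro p hmem hchain θ hθ
    have hpq : p.1 ≠ q.1 := (List.isChain_cons_cons.1 hchain).1
    have hθ' : θ ∈ Θ (!((q :: l).getLast (List.cons_ne_nil _ _)).1) := by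
      rwa [List.getLast_cons (List.cons_ne_nil _ _)] at hθ
    have htail := ih q (fun r hr => hmem r (List.mem_cons_of_mem _ hr))
      (List.isChain_cons_cons.1 hchain).2 θ hθ'
    obtain ⟨h1, h2⟩ := hmem p (List.mem_cons_self)
    have hq1 : q.1 = !p.1 := by
      cases hp : p.1 <;> cases hq : q.1 <;> simp_all
    rw [List.map_cons, List.prod_cons, mul_smul]
    exact hmap p.1 p.2 h1 h2 _ (by rw [← hq1]; exact htail)

/-- Key ping-pong statement in `Γ`: a base element times the product of a
nonempty alternating word is nontrivial. -/
private lemma pp_key {Γ X : Type} [Group Γ] [MulAction Γ X]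
    (G₀ : Subgroup Γ) (Gb : Bool → Subgroup Γ) (Θ : Bool → Set X)
    (hle : ∀ b, G₀ ≤ Gb b)
    (hdisj : ∀ x, x ∈ Θ true → x ∈ Θ false → False)
    (hinv : ∀ b : Bool, ∀ g ∈ G₀, ∀ x ∈ Θ b, g • x ∈ Θ b)
    (hmap : ∀ b : Bool, ∀ g ∈ Gb b, g ∉ G₀ → ∀ x ∈ Θ (!b), g • x ∈ Θ b)
    (hproper : ∀ b : Bool, ∃ θ ∈ Θ b, ∀ g ∈ Gb b, g ∉ G₀ → ∀ x ∈ Θ (!b), g • x ≠ θ)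
    (p : Bool × Γ) (l : List (Bool × Γ))
    (hmem : ∀ q ∈ p :: l, q.2 ∈ Gb q.1 ∧ q.2 ∉ G₀)
    (hchain : (p :: l).Chain' (fun a b => a.1 ≠ b.1))
    (h : Γ) (hh : h ∈ G₀) :
    h * ((p :: l).map Prod.snd).prod ≠ 1 := by
  intro heq
  by_cases hcase : ((p :: l).getLast (List.cons_ne_nil _ _)).1 = p.1
  · obtain ⟨θ, hθ, -⟩ := hproper (!p.1)
    have h1 : ((p :: l).map Prod.snd).prod • θ ∈ Θ p.1 :=
      pp_chain G₀ Gb Θ hmap l p hmem hchain θ (by rw [hcase]; exact hθ)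
    have h2 : (h * ((p :: l).map Prod.snd).prod) • θ ∈ Θ p.1 := by
      rw [mul_smul]; exact hinv p.1 h hh _ h1
    rw [heq, one_smul] at h2
    cases hb : p.1 with
    | false =>
      rw [hb] at h2 hθ
      simp only [Bool.not_false] at hθ
      exact hdisj θ hθ h2
    | true =>
      rw [hb] at h2 hθ
      simp only [Bool.not_true] at hθ
      exact hdisj θ h2 hθ
  · have hlne : l ≠ [] := by
      rintro rfl
      exact hcase rfl
    obtain ⟨q, l', rfl⟩ := List.exists_cons_of_ne_nil hlne
    obtain ⟨θ, hθ, hprop⟩ := hproper p.1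
    have hq1 : q.1 = !p.1 := by
      have := (List.isChain_cons_cons.1 hchain).1
      cases hp : p.1 <;> cases hq : q.1 <;> simp_all
    have hθ' : θ ∈ Θ (!((q :: l').getLast (List.cons_ne_nil _ _)).1) := by
      have : ((q :: l').getLast (List.cons_ne_nil _ _)).1 = !p.1 := by
        have hgl : (p :: q :: l').getLast (List.cons_ne_nil _ _) =
            (q :: l').getLast (List.cons_ne_nil _ _) :=
          List.getLast_cons (List.cons_ne_nil _ _)
        rw [hgl] at hcase
        cases hb : ((q :: l').getLast (List.cons_ne_nil _ _)).1 <;>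
          cases hp : p.1 <;> simp_all
      rw [this, Bool.not_not]
      exact hθ
    have htail : ((q :: l').map Prod.snd).prod • θ ∈ Θ q.1 :=
      pp_chain G₀ Gb Θ hmap l' q (fun r hr => hmem r (List.mem_cons_of_mem _ hr))
        (List.isChain_cons_cons.1 hchain).2 θ hθ'
    obtain ⟨hp1, hp2⟩ := hmem p (List.mem_cons_self)
    have hkey : (h * p.2) • (((q :: l').map Prod.snd).prod • θ) = θ := by
      have h0 : (h * ((p :: q :: l').map Prod.snd).prod) • θ = θ := by
        rw [heq, one_smul]
      simpa [mul_smul, mul_assoc] using h0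
    have hmem1 : h * p.2 ∈ Gb p.1 := mul_mem (hle p.1 hh) hp1
    have hmem0 : h * p.2 ∉ G₀ := by
      intro hc
      exact hp2 (by simpa using mul_mem (inv_mem hh) hc)
    exact hprop (h * p.2) hmem1 hmem0 _ (by rw [← hq1]; exact htail) hkey

theorem pingpong_two_factor_injective
    {Γ X : Type} [Group Γ] [MulAction Γ X]
    (G₀ G₁ G₂ : Subgroup Γ)
    (hle₁ : G₀ ≤ G₁) (hle₂ : G₀ ≤ G₂)
    (hinter : G₁ ⊓ G₂ = G₀)
    (Θ₁ Θ₂ : Set X)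
    (hne₁ : Θ₁.Nonempty) (hne₂ : Θ₂.Nonempty)
    (hdisj : Θ₁ ∩ Θ₂ = ∅)
    (hinv₁ : ∀ g ∈ G₀, ∀ x ∈ Θ₁, g • x ∈ Θ₁)
    (hinv₂ : ∀ g ∈ G₀, ∀ x ∈ Θ₂, g • x ∈ Θ₂)
    (hmap₁ : ∀ g, g ∈ G₁ → g ∉ G₀ → ∀ x ∈ Θ₂, g • x ∈ Θ₁)
    (hmap₂ : ∀ g, g ∈ G₂ → g ∉ G₀ → ∀ x ∈ Θ₁, g • x ∈ Θ₂)
    (hproper₁ : ∃ θ₁ ∈ Θ₁, ∀ g, g ∈ G₁ → g ∉ G₀ → ∀ x ∈ Θ₂, g • x ≠ θ₁)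
    (hproper₂ : ∃ θ₂ ∈ Θ₂, ∀ g, g ∈ G₂ → g ∉ G₀ → ∀ x ∈ Θ₁, g • x ≠ θ₂) :
    Function.Injective
      (Monoid.PushoutI.lift
        (φ := fun b : Bool => Subgroup.inclusion
          (show G₀ ≤ (if b then G₁ else G₂) from by cases b <;> simpa))
        (fun b => (if b then G₁ else G₂ : Subgroup Γ).subtype) G₀.subtype
        (fun b => MonoidHom.ext fun x => rfl)) := by
  classical
  set φ : ∀ b : Bool, ↥G₀ →* ↥(if b then G₁ else G₂) := fun b : Bool => Subgroup.inclusion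
    (show G₀ ≤ (if b then G₁ else G₂) from by cases b <;> simpa) with hφdef
  rw [injective_iff_map_eq_one]
  intro x hx
  obtain ⟨d⟩ := Monoid.PushoutI.NormalWord.transversal_nonempty φ
    (fun b => Subgroup.inclusion_injective _)
  set w := Monoid.PushoutI.NormalWord.equiv (d := d) x with hwdef
  have hw : w.prod = x := (Monoid.PushoutI.NormalWord.equiv (d := d)).symm_apply_apply x
  rw [← hw] at hx ⊢
  have hx' : (↑w.head : Γ) * ((w.toList.map fun s => ((s.2 : Γ))).prod) = 1 := by
    rw [← hx]
    simp [Monoid.PushoutI.NormalWord.prod, CoprodI.Word.prod, map_list_prod, Monoid.PushoutI.lift_base,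
      List.map_map, Function.comp_def]
    exact (Monoid.PushoutI.lift_base (φ := φ) (fun b => (if b then G₁ else G₂ : Subgroup Γ).subtype)
      G₀.subtype (fun b => MonoidHom.ext fun x => rfl) w.head).symm
  rcases hlist : w.toList with _ | ⟨p, l⟩
  · have hhead : w.head = 1 := by
      rw [hlist] at hx'
      simpa using hx'
    have hwempty : w = Monoid.PushoutI.NormalWord.empty :=
      Monoid.PushoutI.NormalWord.ext hhead (by simpa using hlist)
    rw [hwempty, Monoid.PushoutI.NormalWord.prod_empty]
  · exfalso
    have hmemL : ∀ s ∈ w.toList, (s.2 : Γ) ∈ (if s.1 then G₁ else G₂) ∧ (s.2 : Γ) ∉ G₀ := by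
      intro s hs
      refine ⟨s.2.2, ?_⟩
      intro hmem0
      have hset : s.2 ∈ d.set s.1 := w.normalized s.1 s.2 hs
      have hne1 : s.2 ≠ 1 := w.ne_one s hs
      have hrange : s.2 ∈ (φ s.1).range := ⟨⟨(s.2 : Γ), hmem0⟩, Subtype.ext rfl⟩
      have h1 := ((d.compl s.1).coe_equiv_snd_eq_one_iff_mem (d.one_mem s.1)).2 hrange
      have h2 := ((d.compl s.1).equiv_snd_eq_self_iff_mem (one_mem _)).2 hset
      exact hne1 (by rw [← h2, h1])
    have hmemL' : ∀ q ∈ ((p :: l).map fun s => (s.1, (s.2 : Γ))),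
        q.2 ∈ (if q.1 then G₁ else G₂) ∧ q.2 ∉ G₀ := by
      intro q hq
      simp only [List.mem_map] at hq
      obtain ⟨s, hs, rfl⟩ := hq
      exact hmemL s (by rw [hlist]; exact hs)
    have hchainL : ((p :: l).map fun s => (s.1, (s.2 : Γ))).Chain'
        (fun a b => a.1 ≠ b.1) := by
      show List.IsChain _ _
      rw [List.isChain_map, ← hlist]
      exact w.chain_ne
    have heq : (↑w.head : Γ) *
        ((((p :: l).map fun s => (s.1, (s.2 : Γ))).map Prod.snd).prod) = 1 := by
      rw [List.map_map]
      rw [hlist] at hx'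
      simpa [Function.comp_def] using hx'
    exact pp_key G₀ (fun b => if b then G₁ else G₂) (fun b => if b then Θ₁ else Θ₂)
      (fun b => by cases b <;> simpa)
      (fun x h1 h2 => by
        simp only [if_true, Bool.false_eq_true, if_false] at h1 h2
        have : x ∈ Θ₁ ∩ Θ₂ := ⟨h1, h2⟩
        rw [hdisj] at this
        exact this)
      (fun b => by cases b <;> simpa)
      (fun b => by cases b <;> simpa)
      (fun b => by cases b <;> simpa)
      _ _ hmemL' hchainL (↑w.head) w.head.2 heq
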